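/- For every λ > 0, the function x ↦ D_{-λ}(x) is differentiable on ℝ and its derivative satisfies d/dx D_{-λ}(x) = −(x/2)·D_{-λ}(x) − λ·D_{-λ-1}(x) for all x ∈ ℝ. -/

import Mathlib

open MeasureTheory Real

/-- Integrability of `t ^ a * exp (c * t - t ^ 2 / 2)` on `(0, ∞)` for `a > -1`. -/
lemma integrableOn_aux (a c : ℝ) (ha : -1 < a) :
    IntegrableOn (fun t : ℝ => t ^ a * Real.exp (c * t - t ^ 2 / 2)) (Set.Ioi 0) := by
  have hint : IntegrableOn (fun t : ℝ => Real.exp (c ^ 2) *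
      (t ^ a * Real.exp (-(1/4 : ℝ) * t ^ 2))) (Set.Ioi 0) :=
    (integrableOn_rpow_mul_exp_neg_mul_sq (by norm_num) ha).const_mul _
  refine hint.mono' ?_ ?_
  · apply AEStronglyMeasurable.mul
    · exact ((measurable_id.pow measurable_const).aestronglyMeasurable)
    · exact (Real.continuous_exp.comp (by continuity)).aestronglyMeasurable
  · filter_upwards [MeasureTheory.ae_restrict_mem measurableSet_Ioi] with t ht
    have ht0 : (0 : ℝ) < t := ht
    rw [Real.norm_eq_abs, abs_mul, abs_of_nonneg (Real.rpow_nonneg ht0.le a),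
      abs_of_nonneg (Real.exp_pos _).le]
    have h1 : c * t - t ^ 2 / 2 ≤ c ^ 2 + -(1/4 : ℝ) * t ^ 2 := by nlinarith [sq_nonneg (t - 2*c)]
    have := Real.exp_le_exp.mpr h1
    rw [Real.exp_add] at this
    calc t ^ a * Real.exp (c * t - t ^ 2 / 2)
        ≤ t ^ a * (Real.exp (c ^ 2) * Real.exp (-(1/4 : ℝ) * t ^ 2)) := by
          exact mul_le_mul_of_nonneg_left this (Real.rpow_nonneg ht0.le a)
      _ = Real.exp (c ^ 2) * (t ^ a * Real.exp (-(1/4 : ℝ) * t ^ 2)) := by ring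

lemma hasDerivAt_aux (l : ℝ) (hl : 0 < l) (x : ℝ) :
    HasDerivAt (fun y => ∫ t in Set.Ioi (0 : ℝ), t ^ (l - 1) * Real.exp (-y * t - t ^ 2 / 2))
      (-∫ t in Set.Ioi (0 : ℝ), t ^ l * Real.exp (-x * t - t ^ 2 / 2)) x := by
  set F : ℝ → ℝ → ℝ := fun y t => t ^ (l - 1) * Real.exp (-y * t - t ^ 2 / 2)
  set F' : ℝ → ℝ → ℝ := fun y t => -(t ^ l * Real.exp (-y * t - t ^ 2 / 2))
  have hmeas : ∀ y : ℝ, AEStronglyMeasurable (F y) (volume.restrict (Set.Ioi 0)) := by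
    intro y
    exact ((measurable_id.pow measurable_const).mul
      ((Real.continuous_exp.comp (by continuity)).measurable)).aestronglyMeasurable
  have hmeas' : AEStronglyMeasurable (F' x) (volume.restrict (Set.Ioi 0)) := by
    exact (((measurable_id.pow measurable_const).mul
      ((Real.continuous_exp.comp (by continuity)).measurable)).neg).aestronglyMeasurable
  have hint : ∀ y : ℝ, IntegrableOn (F y) (Set.Ioi 0) := by
    intro y
    have := integrableOn_aux (l - 1) (-y) (by linarith)
    simpa [F, neg_mul] using this
  have hbound : IntegrableOn (fun t : ℝ => t ^ l * Real.exp ((|x| + 1) * t - t ^ 2 / 2))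
      (Set.Ioi 0) := integrableOn_aux l (|x| + 1) (by linarith)
  have key := hasDerivAt_integral_of_dominated_loc_of_deriv_le (F := F) (F' := F')
    (μ := volume.restrict (Set.Ioi 0)) (x₀ := x)
    (bound := fun t => t ^ l * Real.exp ((|x| + 1) * t - t ^ 2 / 2))
    (Metric.ball_mem_nhds x one_pos) (Filter.Eventually.of_forall hmeas) (hint x) hmeas' ?_ hbound ?_
  · exact key.2.congr_deriv (by simp [F', integral_neg])
  · filter_upwards [MeasureTheory.ae_restrict_mem measurableSet_Ioi] with t ht y hy
    have ht0 : (0 : ℝ) < t := ht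
    have : ‖F' y t‖ = t ^ l * Real.exp (-y * t - t ^ 2 / 2) := by
      rw [norm_neg, Real.norm_eq_abs, abs_mul, abs_of_nonneg (Real.rpow_nonneg ht0.le l),
        abs_of_nonneg (Real.exp_pos _).le]
    rw [this]
    apply mul_le_mul_of_nonneg_left _ (Real.rpow_nonneg ht0.le l)
    apply Real.exp_le_exp.mpr
    have hyx : |y| ≤ |x| + 1 := by
      have := abs_sub_abs_le_abs_sub y x
      rw [Metric.mem_ball, Real.dist_eq] at hy
      linarith
    have : -y * t ≤ (|x| + 1) * t := by
      apply mul_le_mul_of_nonneg_right _ ht0.le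
      calc -y ≤ |y| := neg_le_abs y
        _ ≤ |x| + 1 := hyx
    linarith
  · filter_upwards [MeasureTheory.ae_restrict_mem measurableSet_Ioi] with t ht y hy
    have ht0 : (0 : ℝ) < t := ht
    have h1 : HasDerivAt (fun z : ℝ => -z * t - t ^ 2 / 2) (-t) y := by
      simpa using ((hasDerivAt_id y).neg.mul_const t).sub_const (t ^ 2 / 2)
    have h2 : HasDerivAt (fun z : ℝ => Real.exp (-z * t - t ^ 2 / 2))
        (Real.exp (-y * t - t ^ 2 / 2) * (-t)) y := h1.exp
    have h3 := h2.const_mul (t ^ (l - 1))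
    refine h3.congr_deriv ?_
    have : t ^ (l - 1) * t = t ^ l := by
      rw [← Real.rpow_add_one ht0.ne' (l - 1)]; ring_nf
    simp only [F']
    rw [← this]; ring

/-- The parabolic cylinder function `D_{-λ}(x)`, defined for `λ > 0` by
`D_{-λ}(x) = (1/Γ(λ)) · e^{-x²/4} · ∫₀^∞ t^(λ-1) e^{-x t - t²/2} dt`.
Here `parabolicCylinderD l x` denotes `D_{-l}(x)`. -/
noncomputable def parabolicCylinderD (l x : ℝ) : ℝ :=
  (1 / Real.Gamma l) * Real.exp (-x ^ 2 / 4) *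
    ∫ t in Set.Ioi (0 : ℝ), t ^ (l - 1) * Real.exp (-x * t - t ^ 2 / 2)

/-- `d/dx D_{-λ}(x) = −(x/2)·D_{-λ}(x) − λ·D_{-λ-1}(x)`. -/
theorem hasDerivAt_parabolicCylinderD (l : ℝ) (hl : 0 < l) (x : ℝ) :
    HasDerivAt (fun y => parabolicCylinderD l y)
      (-(x / 2) * parabolicCylinderD l x - l * parabolicCylinderD (l + 1) x) x := by
  have hF := hasDerivAt_aux l hl x
  have hexp : HasDerivAt (fun y : ℝ => Real.exp (-y ^ 2 / 4))
      (-(x / 2) * Real.exp (-x ^ 2 / 4)) x := by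
    have h1 : HasDerivAt (fun y : ℝ => -y ^ 2 / 4) (-(x / 2)) x := by
      have := (hasDerivAt_pow 2 x).neg.div_const 4
      refine this.congr_deriv ?_; push_cast; ring
    simpa [mul_comm] using h1.exp
  have hprod := ((hexp.fun_mul hF).const_mul (1 / Real.Gamma l))
  have heq : (fun y => parabolicCylinderD l y) = fun y => (1 / Real.Gamma l) *
      (Real.exp (-y ^ 2 / 4) *
        ∫ t in Set.Ioi (0 : ℝ), t ^ (l - 1) * Real.exp (-y * t - t ^ 2 / 2)) := by
    funext y; unfold parabolicCylinderD; ring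
  rw [heq]
  refine hprod.congr_deriv ?_
  unfold parabolicCylinderD
  have hG : Real.Gamma (l + 1) = l * Real.Gamma l := Real.Gamma_add_one hl.ne'
  have hG0 : Real.Gamma l ≠ 0 := (Real.Gamma_pos_of_pos hl).ne'
  rw [hG]
  have hsimp : (l + 1 - 1 : ℝ) = l := by ring
  rw [hsimp]
  field_simp
  ring
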